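/- Dobrushin coefficient of the noisy quantum circuit: let n be a nonempty finite type with d := Fintype.card n, let φ ∈ [0,1] and p ∈ [0,1], let U ∈ Matrix.unitaryGroup n ℂ, and let E : Fin m → Matrix n n ℂ be a POVM. For a unit vector w : EuclideanSpace ℂ n set ρ_w := Matrix.vecMulVec w (star w) and define the measurement-outcome probabilities q_w(i) := Re(Tr(E i * ((1 - p) • (U * ρ_w * Uᴴ) + (p/d) • (1 : Matrix n n ℂ)))). Then for all unit vectors u, v with ‖⟪u, v⟫‖² ≥ φ, we have ∑_{i : Fin m} max(0, q_u(i) - q_v(i)) ≤ (1 - p) * Real.sqrt(1 - φ). -/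

import Mathlib

open Matrix
open scoped ComplexOrder InnerProductSpace

/-- The density matrix of the pure state associated with a vector
`w : EuclideanSpace ℂ n`, i.e. the outer product `|w⟩⟨w|`. -/
noncomputable def pureState {n : Type*} [Fintype n]
    (w : EuclideanSpace ℂ n) : Matrix n n ℂ :=
  Matrix.vecMulVec (w : n → ℂ) (star (w : n → ℂ))

/-- Outcome probabilities of measuring the POVM element `E i` on the state
obtained from the pure state `|w⟩⟨w|` after the unitary `U` followed by the
depolarizing channel with parameter `p`. -/
noncomputable def outcomeProb {n : Type*} [Fintype n] [DecidableEq n] {m : ℕ}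
    (E : Fin m → Matrix n n ℂ) (U : Matrix.unitaryGroup n ℂ) (p : ℝ)
    (w : EuclideanSpace ℂ n) (i : Fin m) : ℝ :=
  (E i * ((1 - p) • ((U : Matrix n n ℂ) * pureState w * (U : Matrix n n ℂ)ᴴ)
      + (p / (Fintype.card n : ℝ)) • (1 : Matrix n n ℂ))).trace.re

/-- Classical total-variation vs Bhattacharyya bound. -/
private lemma tv_aux {m : ℕ} (a b : Fin m → ℝ) (ha : ∀ i, 0 ≤ a i) (hb : ∀ i, 0 ≤ b i)
    (hsa : ∑ i, a i = 1) (hsb : ∑ i, b i = 1) (s : ℝ) (hs0 : 0 ≤ s)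
    (hs : s ≤ ∑ i, Real.sqrt (a i) * Real.sqrt (b i)) :
    ∑ i, max 0 (a i - b i) ≤ Real.sqrt (1 - s ^ 2) := by
  set t : ℝ := ∑ i, Real.sqrt (a i) * Real.sqrt (b i) with ht
  have ht0 : 0 ≤ t := Finset.sum_nonneg fun i _ =>
    mul_nonneg (Real.sqrt_nonneg _) (Real.sqrt_nonneg _)
  have ht1 : t ≤ 1 := by
    have := Finset.sum_mul_sq_le_sq_mul_sq Finset.univ
      (fun i => Real.sqrt (a i)) (fun i => Real.sqrt (b i))
    simp only [Real.sq_sqrt (ha _), Real.sq_sqrt (hb _), hsa, hsb, one_mul] at this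
    nlinarith
  have key : ∑ i, |a i - b i| ≤ 2 * Real.sqrt (1 - t ^ 2) := by
    have habs : ∀ i, |a i - b i|
        = |Real.sqrt (a i) - Real.sqrt (b i)| * (Real.sqrt (a i) + Real.sqrt (b i)) := by
      intro i
      rw [← abs_of_nonneg (add_nonneg (Real.sqrt_nonneg (a i)) (Real.sqrt_nonneg (b i))),
        ← abs_mul]
      congr 1
      nlinarith [Real.sq_sqrt (ha i), Real.sq_sqrt (hb i)]
    have hcs := Finset.sum_mul_sq_le_sq_mul_sq Finset.univ
      (fun i => |Real.sqrt (a i) - Real.sqrt (b i)|)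
      (fun i => Real.sqrt (a i) + Real.sqrt (b i))
    have h1 : ∑ i, |Real.sqrt (a i) - Real.sqrt (b i)| ^ 2 = 2 - 2 * t := by
      simp only [sq_abs, sub_sq]
      rw [Finset.sum_add_distrib, Finset.sum_sub_distrib]
      simp only [Real.sq_sqrt (ha _), Real.sq_sqrt (hb _), hsa, hsb, mul_assoc,
        ← Finset.mul_sum]
      ring
    have h2 : ∑ i, (Real.sqrt (a i) + Real.sqrt (b i)) ^ 2 = 2 + 2 * t := by
      simp only [add_sq]
      rw [Finset.sum_add_distrib, Finset.sum_add_distrib]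
      simp only [Real.sq_sqrt (ha _), Real.sq_sqrt (hb _), hsa, hsb, mul_assoc,
        ← Finset.mul_sum]
      ring
    rw [h1, h2] at hcs
    have hsum : ∑ i, |a i - b i| = ∑ i, |Real.sqrt (a i) - Real.sqrt (b i)|
        * (Real.sqrt (a i) + Real.sqrt (b i)) := Finset.sum_congr rfl fun i _ => habs i
    have hnn : 0 ≤ ∑ i, |a i - b i| := Finset.sum_nonneg fun i _ => abs_nonneg _
    have hrhs : (2 * Real.sqrt (1 - t ^ 2)) ^ 2 = (2 - 2 * t) * (2 + 2 * t) := by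
      rw [mul_pow, Real.sq_sqrt (by nlinarith)]
      ring
    have : (∑ i, |a i - b i|) ^ 2 ≤ (2 * Real.sqrt (1 - t ^ 2)) ^ 2 := by
      rw [hrhs, hsum]; exact hcs
    exact (pow_le_pow_iff_left₀ hnn (by positivity) two_ne_zero).mp this
  have hmax : ∀ x : ℝ, max 0 x = (|x| + x) / 2 := by
    intro x; rcases le_or_gt 0 x with h | h
    · rw [max_eq_right h, abs_of_nonneg h]; ring
    · rw [max_eq_left h.le, abs_of_neg h]; ring
  calc ∑ i, max 0 (a i - b i) = (∑ i, |a i - b i| + ∑ i, (a i - b i)) / 2 := by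
        simp only [hmax]; rw [← Finset.sum_add_distrib, ← Finset.sum_div]
    _ = (∑ i, |a i - b i|) / 2 := by
        rw [Finset.sum_sub_distrib, hsa, hsb]; ring_nf
    _ ≤ Real.sqrt (1 - t ^ 2) := by linarith
    _ ≤ Real.sqrt (1 - s ^ 2) := Real.sqrt_le_sqrt (by nlinarith)

private lemma trace_mul_vecMulVec {n : Type*} [Fintype n] (A : Matrix n n ℂ) (w : n → ℂ) :
    (A * Matrix.vecMulVec w (star w)).trace = star w ⬝ᵥ (A *ᵥ w) := by
  simp only [Matrix.trace, Matrix.diag, Matrix.mul_apply, Matrix.vecMulVec_apply,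
    Matrix.mulVec, dotProduct, Pi.star_apply, Finset.mul_sum]
  exact Finset.sum_congr rfl fun j _ => Finset.sum_congr rfl fun k _ => by ring

private lemma conj_dot {n : Type*} [Fintype n] (B : Matrix n n ℂ) (x y : n → ℂ) :
    star x ⬝ᵥ ((Bᴴ * B) *ᵥ y) = star (B *ᵥ x) ⬝ᵥ (B *ᵥ y) := by
  rw [Matrix.star_mulVec, ← Matrix.mulVec_mulVec, Matrix.dotProduct_mulVec]

private lemma trace_povm_state {n : Type*} [Fintype n] [DecidableEq n]
    (A : Matrix n n ℂ) (U : Matrix.unitaryGroup n ℂ) (w : EuclideanSpace ℂ n) :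
    (A * ((U : Matrix n n ℂ) * pureState w * (U : Matrix n n ℂ)ᴴ)).trace
      = star ((U : Matrix n n ℂ) *ᵥ (w : n → ℂ))
          ⬝ᵥ (A *ᵥ ((U : Matrix n n ℂ) *ᵥ (w : n → ℂ))) := by
  set M : Matrix n n ℂ := (U : Matrix n n ℂ)
  have h1 : A * (M * pureState w * Mᴴ) = (A * M) * pureState w * Mᴴ := by
    noncomm_ring
  rw [h1, Matrix.trace_mul_cycle (A * M) (pureState w) Mᴴ, pureState, trace_mul_vecMulVec]
  simp only [Matrix.star_mulVec, Matrix.dotProduct_mulVec, Matrix.vecMul_vecMul,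
    Matrix.mul_assoc]

private lemma outcomeProb_eq {n : Type*} [Fintype n] [DecidableEq n] {m : ℕ}
    (E : Fin m → Matrix n n ℂ) (U : Matrix.unitaryGroup n ℂ) (p : ℝ)
    (w : EuclideanSpace ℂ n) (i : Fin m) :
    outcomeProb E U p w i
      = (1 - p) * (star ((U : Matrix n n ℂ) *ᵥ (w : n → ℂ))
          ⬝ᵥ (E i *ᵥ ((U : Matrix n n ℂ) *ᵥ (w : n → ℂ)))).re
        + (p / (Fintype.card n : ℝ)) * (E i).trace.re := by
  unfold outcomeProb
  rw [mul_add, Matrix.mul_smul, Matrix.mul_smul, Matrix.trace_add, Matrix.trace_smul,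
    Matrix.trace_smul, mul_one, trace_povm_state]
  simp [Complex.add_re, Complex.real_smul, Complex.mul_re, Complex.ofReal_re,
    Complex.ofReal_im]

/-- Dobrushin coefficient of the noisy quantum circuit: the total-variation
distance between the outcome distributions of two pure states with overlap at
least `φ` is at most `(1 - p) * √(1 - φ)`. -/
theorem noisy_circuit_dobrushin
    {n : Type*} [Fintype n] [DecidableEq n] [Nonempty n] {m : ℕ}
    (φ p : ℝ) (hφ0 : 0 ≤ φ) (hφ1 : φ ≤ 1) (hp0 : 0 ≤ p) (hp1 : p ≤ 1)
    (U : Matrix.unitaryGroup n ℂ)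
    (E : Fin m → Matrix n n ℂ) (hE : ∀ i, (E i).PosSemidef)
    (hEsum : ∑ i, E i = 1) :
    ∀ u v : EuclideanSpace ℂ n, ‖u‖ = 1 → ‖v‖ = 1 →
      φ ≤ ‖⟪u, v⟫_ℂ‖ ^ 2 →
      ∑ i, max 0 (outcomeProb E U p u i - outcomeProb E U p v i)
        ≤ (1 - p) * Real.sqrt (1 - φ) := by
  intro u v hu hv hφuv
  set M : Matrix n n ℂ := (U : Matrix n n ℂ) with hM
  have hMU : Mᴴ * M = 1 := by
    have := U.2.1
    rwa [← Matrix.star_eq_conjTranspose]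
  -- unitary invariance of the dot product
  have unit : ∀ z w : n → ℂ, star (M *ᵥ z) ⬝ᵥ (M *ᵥ w) = star z ⬝ᵥ w := by
    intro z w
    rw [Matrix.star_mulVec, Matrix.dotProduct_mulVec, Matrix.vecMul_vecMul, hMU,
      Matrix.vecMul_one]
  set x : n → ℂ := M *ᵥ (u : n → ℂ) with hx
  set y : n → ℂ := M *ᵥ (v : n → ℂ) with hy
  have hBex : ∀ i, ∃ B : Matrix n n ℂ, E i = Bᴴ * B := fun i =>
    by open scoped MatrixOrder in
      obtain ⟨B, hB⟩ := CStarAlgebra.nonneg_iff_eq_star_mul_self.mp (hE i).nonneg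
      exact ⟨B, hB⟩
  choose B hB using hBex
  set X : Fin m → EuclideanSpace ℂ n := fun i => (WithLp.equiv 2 (n → ℂ)).symm (B i *ᵥ x)
    with hX
  set Y : Fin m → EuclideanSpace ℂ n := fun i => (WithLp.equiv 2 (n → ℂ)).symm (B i *ᵥ y)
    with hY
  set a : Fin m → ℝ := fun i => ‖X i‖ ^ 2 with ha
  set b : Fin m → ℝ := fun i => ‖Y i‖ ^ 2 with hb
  have hXY : ∀ i, ⟪X i, Y i⟫_ℂ = star x ⬝ᵥ (E i *ᵥ y) := fun i => by
    rw [hX, hY, EuclideanSpace.inner_eq_star_dotProduct, dotProduct_comm, hB i, conj_dot]; rfl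
  have hXX : ∀ i, ⟪X i, X i⟫_ℂ = star x ⬝ᵥ (E i *ᵥ x) := fun i => by
    rw [hX, EuclideanSpace.inner_eq_star_dotProduct, dotProduct_comm, hB i, conj_dot]; rfl
  have hYY : ∀ i, ⟪Y i, Y i⟫_ℂ = star y ⬝ᵥ (E i *ᵥ y) := fun i => by
    rw [hY, EuclideanSpace.inner_eq_star_dotProduct, dotProduct_comm, hB i, conj_dot]; rfl
  have hax : ∀ i, (star x ⬝ᵥ (E i *ᵥ x)).re = a i := by
    intro i
    rw [← hXX i, inner_self_eq_norm_sq_to_K, ha]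
    simp [← Complex.ofReal_pow]
  have hby : ∀ i, (star y ⬝ᵥ (E i *ᵥ y)).re = b i := by
    intro i
    rw [← hYY i, inner_self_eq_norm_sq_to_K, hb]
    simp [← Complex.ofReal_pow]
  -- summing the POVM
  have hlin : ∀ z w : n → ℂ, ∑ i, star z ⬝ᵥ (E i *ᵥ w) = star z ⬝ᵥ w := by
    intro z w
    have h := map_sum (AddMonoidHom.mk' (fun A : Matrix n n ℂ => star z ⬝ᵥ (A *ᵥ w))
      (fun A C => by simp [Matrix.add_mulVec, dotProduct_add])) E Finset.univ
    simp only [AddMonoidHom.mk'_apply] at h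
    rw [← h, hEsum, Matrix.one_mulVec]
  have hnorm1 : ∀ w : EuclideanSpace ℂ n, ‖w‖ = 1 →
      star (M *ᵥ (w : n → ℂ)) ⬝ᵥ (M *ᵥ (w : n → ℂ)) = 1 := by
    intro w hw
    rw [unit]
    have h1 : ⟪w, w⟫_ℂ = star (w : n → ℂ) ⬝ᵥ (w : n → ℂ) := by
      rw [EuclideanSpace.inner_eq_star_dotProduct, dotProduct_comm]
    rw [← h1, inner_self_eq_norm_sq_to_K, hw]
    norm_num
  have hsa : ∑ i, a i = 1 := by
    have h1 : ∑ i, a i = (∑ i, star x ⬝ᵥ (E i *ᵥ x)).re := by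
      rw [Complex.re_sum]
      exact Finset.sum_congr rfl fun i _ => (hax i).symm
    rw [h1, hlin, hx, hnorm1 u hu, Complex.one_re]
  have hsb : ∑ i, b i = 1 := by
    have h1 : ∑ i, b i = (∑ i, star y ⬝ᵥ (E i *ᵥ y)).re := by
      rw [Complex.re_sum]
      exact Finset.sum_congr rfl fun i _ => (hby i).symm
    rw [h1, hlin, hy, hnorm1 v hv, Complex.one_re]
  -- the Bhattacharyya coefficient dominates the overlap
  have hcross : ∀ i, ‖star x ⬝ᵥ (E i *ᵥ y)‖ ≤ Real.sqrt (a i) * Real.sqrt (b i) := by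
    intro i
    rw [← hXY i, ha, hb, Real.sqrt_sq (norm_nonneg _), Real.sqrt_sq (norm_nonneg _)]
    exact norm_inner_le_norm _ _
  have hover : Real.sqrt φ ≤ ∑ i, Real.sqrt (a i) * Real.sqrt (b i) := by
    have h0 : ⟪u, v⟫_ℂ = star (u : n → ℂ) ⬝ᵥ (v : n → ℂ) := by
      rw [EuclideanSpace.inner_eq_star_dotProduct, dotProduct_comm]
    have h1 : Real.sqrt φ ≤ ‖star x ⬝ᵥ y‖ := by
      rw [hx, hy, unit, ← h0]
      calc Real.sqrt φ ≤ Real.sqrt (‖⟪u, v⟫_ℂ‖ ^ 2) := Real.sqrt_le_sqrt hφuv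
        _ = ‖⟪u, v⟫_ℂ‖ := Real.sqrt_sq (norm_nonneg _)
    have h2 : ‖star x ⬝ᵥ y‖ ≤ ∑ i, ‖star x ⬝ᵥ (E i *ᵥ y)‖ := by
      rw [← hlin x y]
      exact norm_sum_le _ _
    exact h1.trans (h2.trans (Finset.sum_le_sum fun i _ => hcross i))
  -- reduce to the classical bound
  have hdiff : ∀ i, outcomeProb E U p u i - outcomeProb E U p v i
      = (1 - p) * (a i - b i) := by
    intro i
    rw [outcomeProb_eq, outcomeProb_eq, ← hx, ← hy, hax i, hby i]
    ring
  have h1p : (0:ℝ) ≤ 1 - p := by linarith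
  calc ∑ i, max 0 (outcomeProb E U p u i - outcomeProb E U p v i)
      = (1 - p) * ∑ i, max 0 (a i - b i) := by
        rw [Finset.mul_sum]
        refine Finset.sum_congr rfl fun i _ => ?_
        rw [hdiff i, mul_max_of_nonneg _ _ h1p, mul_zero]
    _ ≤ (1 - p) * Real.sqrt (1 - Real.sqrt φ ^ 2) := by
        refine mul_le_mul_of_nonneg_left ?_ h1p
        exact tv_aux a b (fun i => sq_nonneg _) (fun i => sq_nonneg _) hsa hsb _
          (Real.sqrt_nonneg _) hover
    _ = (1 - p) * Real.sqrt (1 - φ) := by rw [Real.sq_sqrt hφ0]
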